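/- For every integer n ≥ 1, every integer k, and every real x: (−1)^n · C_{n,p,q}^{(k)}(x)/n! = Σ_{m=1}^{n} binom(n−1,m−1) · Ĉ_{m,p,q}^{(k)}(x)/m!, and symmetrically (−1)^n · Ĉ_{n,p,q}^{(k)}(x)/n! = Σ_{m=1}^{n} binom(n−1,m−1) · C_{m,p,q}^{(k)}(x)/m!. -/

import Mathlib

open Finset

/-- The `(p,q)`-integer `[m]_{p,q} = (p^m - q^m)/(p - q)`. -/
noncomputable def pqInt (p q : ℝ) (m : ℕ) : ℝ := (p ^ m - q ^ m) / (p - q)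

/-- The exponential generating function `∑ f n * t^n / n!` of a sequence `f`. -/
noncomputable def egf (f : ℕ → ℝ) : PowerSeries ℝ :=
  PowerSeries.mk fun n => f n / n.factorial

/-- The power series `∑_{m ≥ 0} (1 - e^{-t})^m / [m+1]_{p,q}^k`
(which equals `Li_{k,p,q}(1 - e^{-t}) / (1 - e^{-t})`).
Since `(1 - e^{-t})^m` has order at least `m`, the `n`-th coefficient only
receives contributions from `m ≤ n`. -/
noncomputable def pqBernSeries (p q : ℝ) (k : ℤ) : PowerSeries ℝ :=
  PowerSeries.mk fun n =>
    ∑ m ∈ Finset.range (n + 1),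
      PowerSeries.coeff n ((1 - PowerSeries.rescale (-1) (PowerSeries.exp ℝ)) ^ m) /
        pqInt p q (m + 1) ^ k

/-- The unsigned Stirling numbers of the first kind, defined by the recurrence
`S1(n+1, m+1) = n * S1(n, m+1) + S1(n, m)`, so that
`x(x+1)⋯(x+n-1) = ∑_{m=0}^{n} S1(n,m) x^m`. -/
def stirling1 : ℕ → ℕ → ℕ
  | 0, 0 => 1
  | 0, _ + 1 => 0
  | _ + 1, 0 => 0
  | n + 1, m + 1 => n * stirling1 n (m + 1) + stirling1 n m

/-- Carlitz's weighted Stirling numbers of the first kind,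
`S1(n,m,x) = ∑_{i=0}^{n-m} binom(m+i,i) S1(n,m+i) x^i`. -/
noncomputable def stirling1W (n m : ℕ) (x : ℝ) : ℝ :=
  ∑ i ∈ Finset.range (n - m + 1), ((m + i).choose i : ℝ) * (stirling1 n (m + i) : ℝ) * x ^ i

/-- Carlitz's weighted Stirling numbers of the second kind,
`S2(n,m,x) = (1/m!) ∑_{j=0}^{m} (-1)^(m-j) binom(m,j) (x+j)^n`. -/
noncomputable def stirling2W (n m : ℕ) (x : ℝ) : ℝ :=
  (1 / (m.factorial : ℝ)) *
    ∑ j ∈ Finset.range (m + 1), (-1 : ℝ) ^ (m - j) * (m.choose j : ℝ) * (x + j) ^ n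

/-- The `(p,q)`-poly-Cauchy polynomials of the first kind. -/
noncomputable def pqCauchy1 (p q : ℝ) (k : ℤ) (x : ℝ) (n : ℕ) : ℝ :=
  ∑ m ∈ Finset.range (n + 1),
    (-1 : ℝ) ^ (n - m) * (stirling1 n m : ℝ) *
      ∑ l ∈ Finset.range (m + 1),
        (m.choose l : ℝ) * (-x) ^ l / pqInt p q (m - l + 1) ^ k

/-- The `(p,q)`-poly-Cauchy polynomials of the second kind. -/
noncomputable def pqCauchy2 (p q : ℝ) (k : ℤ) (x : ℝ) (n : ℕ) : ℝ :=
  (-1 : ℝ) ^ n *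
    ∑ m ∈ Finset.range (n + 1),
      (stirling1 n m : ℝ) *
        ∑ l ∈ Finset.range (m + 1),
          (m.choose l : ℝ) * (-x) ^ l / pqInt p q (m - l + 1) ^ k

namespace PqAux

open Polynomial

/-- The coefficient functional: `L f = ∑_j f.coeff j / [j+1]^k`. -/
noncomputable def L (p q : ℝ) (k : ℤ) : Polynomial ℝ →ₗ[ℝ] ℝ :=
  Polynomial.lsum fun j => (LinearMap.id : ℝ →ₗ[ℝ] ℝ).smulRight (1 / pqInt p q (j + 1) ^ k)

lemma L_apply (p q : ℝ) (k : ℤ) (f : Polynomial ℝ) :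
    L p q k f = f.sum fun j a => a * (1 / pqInt p q (j + 1) ^ k) := by
  simp [L, Polynomial.lsum_apply, LinearMap.smulRight_apply, smul_eq_mul]

lemma stirling1_eq_zero_of_lt : ∀ n m : ℕ, n < m → stirling1 n m = 0 := by
  intro n
  induction n with
  | zero => intro m hm; cases m with
    | zero => omega
    | succ m => simp [stirling1]
  | succ n ih =>
    intro m hm
    cases m with
    | zero => omega
    | succ m =>
      have h1 : stirling1 n (m + 1) = 0 := ih (m + 1) (by omega)
      have h2 : stirling1 n m = 0 := ih m (by omega)
      simp [stirling1, h1, h2]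

lemma asc_eq_sum (n : ℕ) :
    ascPochhammer ℝ n = ∑ m ∈ range (n + 1), (stirling1 n m : ℝ) • (X : Polynomial ℝ) ^ m := by
  induction n with
  | zero => simp [stirling1]
  | succ n ih =>
    rw [ascPochhammer_succ_right, ih, Finset.sum_mul]
    have hterm : ∀ m : ℕ,
        ((stirling1 n m : ℝ) • (X : Polynomial ℝ) ^ m) * (X + (n : Polynomial ℝ))
          = (stirling1 n m : ℝ) • (X : Polynomial ℝ) ^ (m + 1)
            + ((n : ℝ) * (stirling1 n m : ℝ)) • (X : Polynomial ℝ) ^ m := by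
      intro m
      simp only [smul_eq_C_mul, map_mul, map_natCast, pow_succ]
      ring
    simp only [hterm]
    rw [Finset.sum_add_distrib]
    -- target: rewrite RHS
    have htgt : ∑ m ∈ range (n + 2), (stirling1 (n + 1) m : ℝ) • (X : Polynomial ℝ) ^ m
        = ∑ m ∈ range (n + 1),
            (((n : ℝ) * (stirling1 n (m + 1) : ℝ) + (stirling1 n m : ℝ))
              • (X : Polynomial ℝ) ^ (m + 1)) := by
      rw [Finset.sum_range_succ']
      simp only [stirling1]
      push_cast
      simp
    rw [htgt]
    have hsplit : ∀ m : ℕ,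
        (((n : ℝ) * (stirling1 n (m + 1) : ℝ) + (stirling1 n m : ℝ))
            • (X : Polynomial ℝ) ^ (m + 1))
          = (stirling1 n m : ℝ) • (X : Polynomial ℝ) ^ (m + 1)
            + ((n : ℝ) * (stirling1 n (m + 1) : ℝ)) • (X : Polynomial ℝ) ^ (m + 1) := by
      intro m; rw [add_smul, add_comm]
    simp only [hsplit]
    rw [Finset.sum_add_distrib]
    congr 1
    -- shifted sum for the `n * stirling1` part
    rw [Finset.sum_range_succ']
    have hz : ((n : ℝ) * (stirling1 n 0 : ℝ)) • (X : Polynomial ℝ) ^ 0 = 0 := by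
      cases n with
      | zero => simp
      | succ n => simp [stirling1]
    rw [hz, add_zero]
    rw [Finset.sum_range_succ]
    have hz2 : ((n : ℝ) * (stirling1 n (n + 1) : ℝ)) • (X : Polynomial ℝ) ^ (n + 1) = 0 := by
      rw [stirling1_eq_zero_of_lt n (n + 1) (by omega)]; simp
    rw [hz2, add_zero]

lemma desc_comp_eq (n : ℕ) (g : Polynomial ℝ) :
    (descPochhammer ℝ n).comp g = (-1 : ℝ) ^ n • (ascPochhammer ℝ n).comp (-g) := by
  have h : descPochhammer ℝ n = (-1 : ℝ) ^ n • (ascPochhammer ℝ n).comp (-X) := by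
    apply Polynomial.funext
    intro r
    rw [eval_smul, eval_comp, eval_neg, eval_X, smul_eq_mul,
      ascPochhammer_eval_neg_eq_descPochhammer, ← mul_assoc, ← mul_pow]
    norm_num
  rw [h, smul_comp, comp_assoc, neg_comp, X_comp]

lemma L_comp_pow (p q : ℝ) (k : ℤ) (x : ℝ) (m : ℕ) :
    L p q k (((X : Polynomial ℝ) - C x) ^ m)
      = ∑ l ∈ range (m + 1), (m.choose l : ℝ) * (-x) ^ l / pqInt p q (m - l + 1) ^ k := by
  have hform : ((X : Polynomial ℝ) - C x) ^ m = ((X : Polynomial ℝ) + C (-x)) ^ m := by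
    rw [map_neg, sub_eq_add_neg]
  rw [L_apply, hform]
  have hdeg : (((X : Polynomial ℝ) + C (-x)) ^ m).natDegree < m + 1 := by
    have h1 : (((X : Polynomial ℝ) + C (-x)) ^ m).natDegree ≤ m * ((X : Polynomial ℝ) + C (-x)).natDegree :=
      natDegree_pow_le
    have h2 : ((X : Polynomial ℝ) + C (-x)).natDegree = 1 := natDegree_X_add_C _
    rw [h2] at h1
    omega
  rw [Polynomial.sum_over_range' _ (fun j => by simp) (m + 1) hdeg]
  rw [← Finset.sum_range_reflect]
  apply Finset.sum_congr rfl
  intro l hl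
  have hlm : l ≤ m := by simpa using Nat.lt_succ_iff.mp (Finset.mem_range.mp hl)
  rw [coeff_X_add_C_pow]
  have h1 : m + 1 - 1 - l = m - l := by omega
  have h2 : m - (m - l) = l := by omega
  rw [h1, h2, Nat.choose_symm hlm]
  rw [mul_one_div, mul_comm ((-x) ^ l) ((m.choose l : ℝ)), mul_div_assoc]

lemma L_asc_comp (p q : ℝ) (k : ℤ) (n : ℕ) (g : Polynomial ℝ) :
    L p q k ((ascPochhammer ℝ n).comp g)
      = ∑ m ∈ range (n + 1), (stirling1 n m : ℝ) * L p q k (g ^ m) := by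
  rw [asc_eq_sum]
  have hc : (∑ m ∈ range (n + 1), (stirling1 n m : ℝ) • (X : Polynomial ℝ) ^ m).comp g
      = ∑ m ∈ range (n + 1), (stirling1 n m : ℝ) • g ^ m := by
    simp only [Polynomial.comp, Polynomial.eval₂_finset_sum]
    apply Finset.sum_congr rfl
    intro m _
    rw [smul_eq_C_mul, smul_eq_C_mul, eval₂_mul, eval₂_C, eval₂_X_pow]
  rw [hc, map_sum]
  simp [smul_eq_mul]

/-- The first-kind polynomial as the functional applied to `descPochhammer.comp (X - x)`. -/
lemma pqCauchy1_eq (p q : ℝ) (k : ℤ) (x : ℝ) (n : ℕ) :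
    pqCauchy1 p q k x n = L p q k ((descPochhammer ℝ n).comp ((X : Polynomial ℝ) - C x)) := by
  rw [desc_comp_eq, map_smul, smul_eq_mul]
  have hneg : -((X : Polynomial ℝ) - C x) = C x - X := by ring
  rw [hneg, L_asc_comp]
  rw [pqCauchy1, Finset.mul_sum]
  apply Finset.sum_congr rfl
  intro m hm
  have hmn : m ≤ n := by simpa using Nat.lt_succ_iff.mp (Finset.mem_range.mp hm)
  have hpow : ((C x : Polynomial ℝ) - X) ^ m = ((-1 : ℝ) ^ m) • (((X : Polynomial ℝ) - C x) ^ m) := by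
    rw [smul_eq_C_mul]
    have hC : (C x : Polynomial ℝ) - X = C ((-1 : ℝ)) * ((X : Polynomial ℝ) - C x) := by
      rw [map_neg, map_one, neg_one_mul, neg_sub]
    rw [hC, mul_pow, ← C_pow]
  rw [hpow, map_smul, smul_eq_mul, L_comp_pow]
  have hsq : ((-1 : ℝ) ^ m) * ((-1 : ℝ) ^ m) = 1 := by rw [← mul_pow]; norm_num
  have hsign : (-1 : ℝ) ^ n * ((-1 : ℝ) ^ m) = (-1 : ℝ) ^ (n - m) := by
    calc (-1 : ℝ) ^ n * (-1 : ℝ) ^ m = (-1 : ℝ) ^ (n - m + m) * (-1 : ℝ) ^ m := by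
          rw [Nat.sub_add_cancel hmn]
      _ = (-1 : ℝ) ^ (n - m) * ((-1 : ℝ) ^ m * (-1 : ℝ) ^ m) := by rw [pow_add]; ring
      _ = (-1 : ℝ) ^ (n - m) := by rw [hsq, mul_one]
  rw [← mul_assoc, ← mul_assoc]
  rw [mul_comm ((-1 : ℝ) ^ n) ((stirling1 n m : ℝ)), mul_assoc ((stirling1 n m : ℝ)), hsign,
    mul_comm ((stirling1 n m : ℝ)) ((-1 : ℝ) ^ (n - m))]

/-- The second-kind polynomial as the functional applied to `descPochhammer.comp (x - X)`. -/
lemma pqCauchy2_eq (p q : ℝ) (k : ℤ) (x : ℝ) (n : ℕ) :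
    pqCauchy2 p q k x n = L p q k ((descPochhammer ℝ n).comp (C x - (X : Polynomial ℝ))) := by
  rw [desc_comp_eq, map_smul, smul_eq_mul]
  have hneg : -((C x : Polynomial ℝ) - X) = X - C x := by ring
  rw [hneg, L_asc_comp, pqCauchy2]
  congr 1
  apply Finset.sum_congr rfl
  intro m _
  rw [L_comp_pow]

/-- The Lah-number expansion of the rising factorial in terms of falling factorials. -/
lemma lah_poly (N : ℕ) :
    ascPochhammer ℝ (N + 1)
      = ∑ i ∈ range (N + 1),
          ((((N + 1).factorial : ℝ) / ((i + 1).factorial : ℝ)) * ((N.choose i : ℕ) : ℝ))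
            • descPochhammer ℝ (i + 1) := by
  induction N with
  | zero =>
    simp [ascPochhammer_one, descPochhammer_one]
  | succ N ih =>
    rw [ascPochhammer_succ_right, ih, Finset.sum_mul]
    set a : ℕ → ℝ := fun i => (((N + 1).factorial : ℝ) / ((i + 1).factorial : ℝ)) * ((N.choose i : ℕ) : ℝ) with ha
    set b : ℕ → ℝ := fun i => (((N + 2).factorial : ℝ) / ((i + 1).factorial : ℝ)) * (((N + 1).choose i : ℕ) : ℝ) with hb
    have hterm : ∀ i : ℕ,
        (a i • descPochhammer ℝ (i + 1)) * (X + ((N + 1 : ℕ) : Polynomial ℝ))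
          = a i • descPochhammer ℝ (i + 2)
            + (a i * ((N : ℝ) + i + 2)) • descPochhammer ℝ (i + 1) := by
      intro i
      have hdesc : descPochhammer ℝ (i + 2)
          = descPochhammer ℝ (i + 1) * (X - ((i + 1 : ℕ) : Polynomial ℝ)) :=
        descPochhammer_succ_right (R := ℝ) (i + 1)
      rw [hdesc]
      simp only [ha, smul_eq_C_mul, map_mul, map_add, map_natCast, map_ofNat, map_div₀]
      push_cast
      ring
    change ∑ i ∈ range (N + 1), (a i • descPochhammer ℝ (i + 1)) * (X + ((N + 1 : ℕ) : Polynomial ℝ)) = ∑ i ∈ range (N + 1 + 1), b i • descPochhammer ℝ (i + 1)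
    simp only [hterm]
    rw [Finset.sum_add_distrib]
    -- split the second sum
    rw [Finset.sum_range_succ' (fun i => (a i * ((N : ℝ) + i + 2)) • descPochhammer ℝ (i + 1))]
    rw [Finset.sum_range_succ (fun i => a i • descPochhammer ℝ (i + 2))]
    -- rewrite the target
    rw [Finset.sum_range_succ' (fun i => b i • descPochhammer ℝ (i + 1))]
    rw [Finset.sum_range_succ (fun i => b (i + 1) • descPochhammer ℝ (i + 2))]
    have hb0 : b 0 = a 0 * ((N : ℝ) + 0 + 2) := by
      simp only [ha, hb]
      simp [Nat.factorial_succ]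
      push_cast
      ring
    have hbtop : b (N + 1) = a N := by
      have hf1 : ((N + 2).factorial : ℝ) ≠ 0 := by exact_mod_cast (N + 2).factorial_ne_zero
      have hf2 : ((N + 1).factorial : ℝ) ≠ 0 := by exact_mod_cast (N + 1).factorial_ne_zero
      simp only [ha, hb, Nat.choose_self, Nat.cast_one, mul_one]
      rw [show N + 1 + 1 = N + 2 from rfl, div_self hf1, div_self hf2]
    have hbmid : ∀ i : ℕ, i < N →
        b (i + 1) = a i + a (i + 1) * ((N : ℝ) + ((i : ℝ) + 1) + 2) := by
      intro i hi
      simp only [ha, hb]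
      have hfac1 : ((N + 2).factorial : ℝ) = ((N + 2 : ℕ) : ℝ) * ((N + 1).factorial : ℝ) := by
        rw [Nat.factorial_succ (N + 1)]; push_cast; ring
      have hfac2 : ((i + 1 + 1).factorial : ℝ) = ((i + 2 : ℕ) : ℝ) * ((i + 1).factorial : ℝ) := by
        rw [Nat.factorial_succ (i + 1)]; push_cast; ring
      have hpascal : (((N + 1).choose (i + 1) : ℕ) : ℝ)
          = ((N.choose i : ℕ) : ℝ) + ((N.choose (i + 1) : ℕ) : ℝ) := by
        exact_mod_cast congrArg (Nat.cast (R := ℝ)) (Nat.choose_succ_succ N i)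
      have habs : ((N.choose (i + 1) : ℕ) : ℝ) * ((i : ℝ) + 1)
          = ((N.choose i : ℕ) : ℝ) * ((N : ℝ) - (i : ℝ)) := by
        have h := Nat.choose_succ_right_eq N i
        calc ((N.choose (i + 1) : ℕ) : ℝ) * ((i : ℝ) + 1)
            = ((N.choose (i + 1) * (i + 1) : ℕ) : ℝ) := by push_cast; ring
          _ = ((N.choose i * (N - i) : ℕ) : ℝ) := by
              exact_mod_cast congrArg (Nat.cast (R := ℝ)) h
          _ = ((N.choose i : ℕ) : ℝ) * ((N : ℝ) - (i : ℝ)) := by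
              push_cast [Nat.cast_sub (le_of_lt hi)]; ring
      have hne1 : ((i + 1).factorial : ℝ) ≠ 0 := by exact_mod_cast (i + 1).factorial_ne_zero
      rw [hfac1, hfac2, hpascal]
      have hne3 : ((i : ℝ) + 2) ≠ 0 := by positivity
      push_cast
      field_simp
      linear_combination (-1 : ℝ) * habs
    rw [hb0, hbtop]
    have hmid : ∑ i ∈ range N, b (i + 1) • descPochhammer ℝ (i + 1 + 1)
        = ∑ i ∈ range N, (a i • descPochhammer ℝ (i + 2)
            + (a (i + 1) * ((N : ℝ) + ((i : ℝ) + 1) + 2)) • descPochhammer ℝ (i + 2)) := by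
      apply Finset.sum_congr rfl
      intro i hi
      rw [hbmid i (Finset.mem_range.mp hi), add_smul]
    rw [hmid, Finset.sum_add_distrib]
    push_cast
    abel

lemma L_lah (p q : ℝ) (k : ℤ) (N : ℕ) (g : Polynomial ℝ) :
    L p q k ((ascPochhammer ℝ (N + 1)).comp g)
      = ∑ i ∈ range (N + 1),
          ((((N + 1).factorial : ℝ) / ((i + 1).factorial : ℝ)) * ((N.choose i : ℕ) : ℝ))
            * L p q k ((descPochhammer ℝ (i + 1)).comp g) := by
  rw [lah_poly]
  have hc : (∑ i ∈ range (N + 1),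
        ((((N + 1).factorial : ℝ) / ((i + 1).factorial : ℝ)) * ((N.choose i : ℕ) : ℝ))
          • descPochhammer ℝ (i + 1)).comp g
      = ∑ i ∈ range (N + 1),
          ((((N + 1).factorial : ℝ) / ((i + 1).factorial : ℝ)) * ((N.choose i : ℕ) : ℝ))
            • (descPochhammer ℝ (i + 1)).comp g := by
    simp only [Polynomial.comp, Polynomial.eval₂_finset_sum]
    apply Finset.sum_congr rfl
    intro i _
    rw [smul_eq_C_mul, smul_eq_C_mul, eval₂_mul, eval₂_C]
  rw [hc, map_sum]
  simp [smul_eq_mul]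

/-- Icc-to-range reindexing. -/
lemma sum_Icc_one (n : ℕ) (f : ℕ → ℝ) :
    ∑ m ∈ Icc 1 n, f m = ∑ i ∈ range n, f (i + 1) := by
  rw [← Finset.Ico_add_one_right_eq_Icc, Finset.sum_Ico_eq_sum_range]
  simp [add_comm]

end PqAux

theorem pqPolyCauchy_first_second_kind_relations
    (p q : ℝ) (hq : 0 < q) (hqp : q < p) (hp : p ≤ 1) (k : ℤ) :
    ∀ (n : ℕ), 1 ≤ n → ∀ x : ℝ,
      ((-1 : ℝ) ^ n * pqCauchy1 p q k x n / (n.factorial : ℝ) =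
        ∑ m ∈ Finset.Icc 1 n,
          ((n - 1).choose (m - 1) : ℝ) * pqCauchy2 p q k x m / (m.factorial : ℝ)) ∧
      ((-1 : ℝ) ^ n * pqCauchy2 p q k x n / (n.factorial : ℝ) =
        ∑ m ∈ Finset.Icc 1 n,
          ((n - 1).choose (m - 1) : ℝ) * pqCauchy1 p q k x m / (m.factorial : ℝ)) := by
  intro n hn x
  obtain ⟨N, rfl⟩ : ∃ N, n = N + 1 := ⟨n - 1, by omega⟩
  have hfacN : ((N + 1).factorial : ℝ) ≠ 0 := by
    exact_mod_cast (N + 1).factorial_ne_zero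
  have e1 : (-1 : ℝ) ^ (N + 1) * pqCauchy1 p q k x (N + 1)
      = PqAux.L p q k ((ascPochhammer ℝ (N + 1)).comp (Polynomial.C x - Polynomial.X)) := by
    rw [PqAux.pqCauchy1_eq, PqAux.desc_comp_eq, map_smul, smul_eq_mul, ← mul_assoc, ← mul_pow,
      neg_sub]
    norm_num
  have e2 : (-1 : ℝ) ^ (N + 1) * pqCauchy2 p q k x (N + 1)
      = PqAux.L p q k ((ascPochhammer ℝ (N + 1)).comp (Polynomial.X - Polynomial.C x)) := by
    rw [PqAux.pqCauchy2_eq, PqAux.desc_comp_eq, map_smul, smul_eq_mul, ← mul_assoc, ← mul_pow,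
      neg_sub]
    norm_num
  constructor
  · rw [e1, PqAux.L_lah,
      PqAux.sum_Icc_one (N + 1)
        (fun m => ((N + 1 - 1).choose (m - 1) : ℝ) * pqCauchy2 p q k x m / (m.factorial : ℝ)),
      Finset.sum_div]
    apply Finset.sum_congr rfl
    intro i _
    rw [← PqAux.pqCauchy2_eq]
    simp only [Nat.add_sub_cancel]
    have hfi : ((i + 1).factorial : ℝ) ≠ 0 := by exact_mod_cast (i + 1).factorial_ne_zero
    field_simp
  · rw [e2, PqAux.L_lah,
      PqAux.sum_Icc_one (N + 1)
        (fun m => ((N + 1 - 1).choose (m - 1) : ℝ) * pqCauchy1 p q k x m / (m.factorial : ℝ)),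
      Finset.sum_div]
    apply Finset.sum_congr rfl
    intro i _
    rw [← PqAux.pqCauchy1_eq]
    simp only [Nat.add_sub_cancel]
    have hfi : ((i + 1).factorial : ℝ) ≠ 0 := by exact_mod_cast (i + 1).factorial_ne_zero
    field_simp
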